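/- Let Ω ⊆ ℂ be open and let A, B, C, D : Ω → ℂ be holomorphic with A(z)D(z) − B(z)C(z) = 1 for all z ∈ Ω. Define w(z) = 1/(|A(z)|² + |B(z)|²) and ζ(z) = (conj(A(z))·C(z) + conj(B(z))·D(z))/(|A(z)|² + |B(z)|²). Then for every z ∈ Ω, (ζ(z)/w(z)²)·conj(D_z ζ(z) + i·D_{iz} ζ(z)) + (1/w(z))·D_z w(z) = 2z·(B′(z)·C(z) − A′(z)·D(z)) + (i/w(z))·D_{iz} w(z), where D_v f(z) denotes the real Fréchet derivative of f at z applied to the vector v ∈ ℂ. -/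

import Mathlib

open Complex

set_option maxHeartbeats 2000000 in
/-- Expression of the coefficient `a₁(z)` (lemma coeffintegral, first identity):
`(ζ/w²)·conj(ρ ∂ζ/∂ρ + i ∂ζ/∂τ) + (ρ/w)·∂w/∂ρ = 2z(B′C − A′D) + i ∂(ln w)/∂τ`,
where `ρ ∂f/∂ρ(z) = D_z f(z)` and `∂f/∂τ(z) = D_{iz} f(z)` are real Fréchet
derivatives applied to the vectors `z` and `iz` respectively. -/
theorem stmt3 (Ω : Set ℂ) (hΩ : IsOpen Ω) (A B C D : ℂ → ℂ)
    (hA : DifferentiableOn ℂ A Ω) (hB : DifferentiableOn ℂ B Ω)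
    (hC : DifferentiableOn ℂ C Ω) (hD : DifferentiableOn ℂ D Ω)
    (hdet : ∀ z ∈ Ω, A z * D z - B z * C z = 1)
    (w : ℂ → ℝ) (ζ : ℂ → ℂ)
    (hw : ∀ z, w z = 1 / (‖A z‖ ^ 2 + ‖B z‖ ^ 2))
    (hζ : ∀ z, ζ z = ((starRingEnd ℂ) (A z) * C z + (starRingEnd ℂ) (B z) * D z) /
      ((‖A z‖ ^ 2 + ‖B z‖ ^ 2 : ℝ) : ℂ)) :
    ∀ z ∈ Ω,
      (ζ z / (w z : ℂ) ^ 2) *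
          (starRingEnd ℂ) (fderiv ℝ ζ z z + Complex.I * fderiv ℝ ζ z (Complex.I * z))
        + ((1 / w z : ℝ) : ℂ) * ((fderiv ℝ w z z : ℝ) : ℂ) =
      2 * z * (deriv B z * C z - deriv A z * D z)
        + (Complex.I / (w z : ℂ)) * ((fderiv ℝ w z (Complex.I * z) : ℝ) : ℂ) := by
  intro z hz
  have hmem : Ω ∈ nhds z := hΩ.mem_nhds hz
  have haD : DifferentiableAt ℂ A z := hA.differentiableAt hmem
  have hbD : DifferentiableAt ℂ B z := hB.differentiableAt hmem
  have hcD : DifferentiableAt ℂ C z := hC.differentiableAt hmem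
  have hdD : DifferentiableAt ℂ D z := hD.differentiableAt hmem
  have haR := haD.hasDerivAt.hasFDerivAt.restrictScalars ℝ
  have hbR := hbD.hasDerivAt.hasFDerivAt.restrictScalars ℝ
  have hcR := hcD.hasDerivAt.hasFDerivAt.restrictScalars ℝ
  have hdR := hdD.hasDerivAt.hasFDerivAt.restrictScalars ℝ
  have hcA : HasFDerivAt (fun x => (starRingEnd ℂ) (A x)) _ z :=
    ((Complex.conjCLE : ℂ ≃L[ℝ] ℂ).toContinuousLinearMap.hasFDerivAt).comp z haR
  have hcB : HasFDerivAt (fun x => (starRingEnd ℂ) (B x)) _ z :=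
    ((Complex.conjCLE : ℂ ≃L[ℝ] ℂ).toContinuousLinearMap.hasFDerivAt).comp z hbR
  -- numerator and denominator
  have hPd : HasFDerivAt (fun x => (starRingEnd ℂ) (A x) * C x + (starRingEnd ℂ) (B x) * D x) _ z :=
    (hcA.mul hcR).add (hcB.mul hdR)
  have hNd : HasFDerivAt (fun x => A x * (starRingEnd ℂ) (A x) + B x * (starRingEnd ℂ) (B x)) _ z :=
    (haR.mul hcA).add (hbR.mul hcB)
  -- positivity
  have hpos : ∀ x, (0:ℝ) ≤ ‖A x‖ ^ 2 + ‖B x‖ ^ 2 := fun x => by positivity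
  have hpos' : (0:ℝ) < ‖A z‖ ^ 2 + ‖B z‖ ^ 2 := by
    rcases eq_or_ne (A z) 0 with hA0 | hA0
    · have hB0 : B z ≠ 0 := by
        intro h; have h2 := hdet z hz; rw [hA0, h] at h2; simp at h2
      have : ‖B z‖ ≠ 0 := by simpa using hB0
      positivity
    · have : ‖A z‖ ≠ 0 := by simpa using hA0
      positivity
  have hNcc : ∀ x, A x * (starRingEnd ℂ) (A x) + B x * (starRingEnd ℂ) (B x)
      = ((‖A x‖ ^ 2 + ‖B x‖ ^ 2 : ℝ) : ℂ) := by
    intro x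
    rw [Complex.mul_conj, Complex.mul_conj, ← Complex.ofReal_add,
      Complex.normSq_eq_norm_sq, Complex.normSq_eq_norm_sq]
  have hNz : A z * (starRingEnd ℂ) (A z) + B z * (starRingEnd ℂ) (B z) ≠ 0 := by
    rw [hNcc]
    exact_mod_cast ne_of_gt hpos'
  -- inverse of denominator
  have hinvd : HasFDerivAt (fun x => (A x * (starRingEnd ℂ) (A x) + B x * (starRingEnd ℂ) (B x))⁻¹)
      _ z := (hasFDerivAt_inv' hNz).comp z hNd
  -- zeta as quotient
  have hzeq : ζ = fun x => ((starRingEnd ℂ) (A x) * C x + (starRingEnd ℂ) (B x) * D x) *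
      (A x * (starRingEnd ℂ) (A x) + B x * (starRingEnd ℂ) (B x))⁻¹ := by
    funext x; rw [hζ, hNcc, div_eq_mul_inv]
  have hζd : HasFDerivAt (fun x => ((starRingEnd ℂ) (A x) * C x + (starRingEnd ℂ) (B x) * D x) *
      (A x * (starRingEnd ℂ) (A x) + B x * (starRingEnd ℂ) (B x))⁻¹) _ z := hPd.mul hinvd
  rw [← hzeq] at hζd
  -- w coerced to ℂ
  have hwCeq : (fun x => ((w x : ℝ) : ℂ)) = fun x =>
      (A x * (starRingEnd ℂ) (A x) + B x * (starRingEnd ℂ) (B x))⁻¹ := by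
    funext x; rw [hw, hNcc]; push_cast; ring
  have hwCd := hinvd
  rw [← hwCeq] at hwCd
  have hwd : HasFDerivAt w (Complex.reCLM.comp _) z := Complex.reCLM.hasFDerivAt.comp z hwCd
  -- explicit formula for the real derivative of ζ in direction z
  have e1 : fderiv ℝ ζ z z = (-(((starRingEnd ℂ) (A z) * C z + (starRingEnd ℂ) (B z) * D z) * ((A z * (starRingEnd ℂ) (A z) + B z * (starRingEnd ℂ) (B z))⁻¹ * ((starRingEnd ℂ) (A z) * deriv A z + (starRingEnd ℂ) (B z) * deriv B z) * (A z * (starRingEnd ℂ) (A z) + B z * (starRingEnd ℂ) (B z))⁻¹)) + (A z * (starRingEnd ℂ) (A z) + B z * (starRingEnd ℂ) (B z))⁻¹ * ((starRingEnd ℂ) (A z) * deriv C z + (starRingEnd ℂ) (B z) * deriv D z)) * z + (-(((starRingEnd ℂ) (A z) * C z + (starRingEnd ℂ) (B z) * D z) * ((A z * (starRingEnd ℂ) (A z) + B z * (starRingEnd ℂ) (B z))⁻¹ * (A z * (starRingEnd ℂ) (deriv A z) + B z * (starRingEnd ℂ) (deriv B z)) * (A z * (starRingEnd ℂ) (A z)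 + B z * (starRingEnd ℂ) (B z))⁻¹)) + (A z * (starRingEnd ℂ) (A z) + B z * (starRingEnd ℂ) (B z))⁻¹ * ((starRingEnd ℂ) (deriv A z) * C z + (starRingEnd ℂ) (deriv B z) * D z)) * (starRingEnd ℂ) z := by
    rw [hζd.fderiv]
    simp only [ContinuousLinearMap.coe_comp', Function.comp_apply, ContinuousLinearMap.add_apply,
    ContinuousLinearMap.coe_smul', Pi.smul_apply, ContinuousLinearMap.coe_restrictScalars',
    ContinuousLinearMap.smulRight_apply, ContinuousLinearMap.one_apply, ContinuousLinearMap.toSpanSingleton_apply,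
    ContinuousLinearEquiv.coe_coe, Complex.conjCLE_apply, smul_eq_mul,
    ContinuousLinearMap.neg_apply, ContinuousLinearMap.mulLeftRight_apply,
    Complex.reCLM_apply, map_mul, Complex.conj_I]
    ring
  have e2 : fderiv ℝ ζ z (Complex.I * z)
      = (-(((starRingEnd ℂ) (A z) * C z + (starRingEnd ℂ) (B z) * D z) * ((A z * (starRingEnd ℂ) (A z) + B z * (starRingEnd ℂ) (B z))⁻¹ * ((starRingEnd ℂ) (A z) * deriv A z + (starRingEnd ℂ) (B z) * deriv B z) * (A z * (starRingEnd ℂ) (A z) + B z * (starRingEnd ℂ) (B z))⁻¹)) + (A z * (starRingEnd ℂ) (A z) + B z * (starRingEnd ℂ) (B z))⁻¹ * ((starRingEnd ℂ) (A z) * deriv C z + (starRingEnd ℂ) (B z) * deriv D z)) * (Complex.I * z) - (-(((starRingEnd ℂ) (A z) * C z + (starRingEnd ℂ) (B z) * D z) * ((A z * (starRingEnd ℂ) (A z) + B z * (starRingEnd ℂ) (B z))⁻¹ * (A z * (starRingEnd ℂ) (deriv A z) + B z * (starRingEnd ℂ) (deriv B z)) * (A z * (starRingEnd ℂ) (A z)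 + B z * (starRingEnd ℂ) (B z))⁻¹)) + (A z * (starRingEnd ℂ) (A z) + B z * (starRingEnd ℂ) (B z))⁻¹ * ((starRingEnd ℂ) (deriv A z) * C z + (starRingEnd ℂ) (deriv B z) * D z)) * (Complex.I * (starRingEnd ℂ) z) := by
    rw [hζd.fderiv]
    simp only [ContinuousLinearMap.coe_comp', Function.comp_apply, ContinuousLinearMap.add_apply,
    ContinuousLinearMap.coe_smul', Pi.smul_apply, ContinuousLinearMap.coe_restrictScalars',
    ContinuousLinearMap.smulRight_apply, ContinuousLinearMap.one_apply, ContinuousLinearMap.toSpanSingleton_apply,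
    ContinuousLinearEquiv.coe_coe, Complex.conjCLE_apply, smul_eq_mul,
    ContinuousLinearMap.neg_apply, ContinuousLinearMap.mulLeftRight_apply,
    Complex.reCLM_apply, map_mul, Complex.conj_I]
    ring
  have hcombo : fderiv ℝ ζ z z + Complex.I * fderiv ℝ ζ z (Complex.I * z)
      = 2 * (-(((starRingEnd ℂ) (A z) * C z + (starRingEnd ℂ) (B z) * D z) * ((A z * (starRingEnd ℂ) (A z) + B z * (starRingEnd ℂ) (B z))⁻¹ * (A z * (starRingEnd ℂ) (deriv A z) + B z * (starRingEnd ℂ) (deriv B z)) * (A z * (starRingEnd ℂ) (A z) + B z * (starRingEnd ℂ) (B z))⁻¹)) + (A z * (starRingEnd ℂ) (A z) + B z * (starRingEnd ℂ) (B z))⁻¹ * ((starRingEnd ℂ) (deriv A z) * C z + (starRingEnd ℂ) (deriv B z) * D z)) * (starRingEnd ℂ) z := by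
    rw [e1, e2]
    linear_combination ((-(((starRingEnd ℂ) (A z) * C z + (starRingEnd ℂ) (B z) * D z) * ((A z * (starRingEnd ℂ) (A z) + B z * (starRingEnd ℂ) (B z))⁻¹ * ((starRingEnd ℂ) (A z) * deriv A z + (starRingEnd ℂ) (B z) * deriv B z) * (A z * (starRingEnd ℂ) (A z) + B z * (starRingEnd ℂ) (B z))⁻¹)) + (A z * (starRingEnd ℂ) (A z) + B z * (starRingEnd ℂ) (B z))⁻¹ * ((starRingEnd ℂ) (A z) * deriv C z + (starRingEnd ℂ) (B z) * deriv D z)) * z - (-(((starRingEnd ℂ) (A z) * C z + (starRingEnd ℂ) (B z) * D z) * ((A z * (starRingEnd ℂ) (A z) + B z * (starRingEnd ℂ) (B z))⁻¹ * (A z * (starRingEnd ℂ) (deriv A z) + B z * (starRingEnd ℂ) (deriv B z)) * (A z * (starRingEnd ℂ) (A z) + B z * (starRingEnd ℂ) (B z))⁻¹)) + (A z * (starRingEnd ℂ) (A z) + B z * (starRingEnd ℂ) (B z))⁻¹ * ((starRingEnd ℂ) (deriv A z) * C z + (starRingEnd ℂ) (deriv B z) * D z)) * (starRingEnd ℂ)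 z) * Complex.I_sq
  -- real part helper
  have hre : ∀ X : ℂ, ((X.re : ℝ) : ℂ) = (X + (starRingEnd ℂ) X) / 2 := by
    intro X
    rw [Complex.add_conj]
    push_cast
    ring
  -- explicit formulas for the real derivative of w
  have f1 : ((fderiv ℝ w z z : ℝ) : ℂ)
      = -((A z * (starRingEnd ℂ) (A z) + B z * (starRingEnd ℂ) (B z))⁻¹ * (((starRingEnd ℂ) (A z) * deriv A z + (starRingEnd ℂ) (B z) * deriv B z) * z + (A z * (starRingEnd ℂ) (deriv A z) + B z * (starRingEnd ℂ) (deriv B z)) * (starRingEnd ℂ) z) * (A z * (starRingEnd ℂ) (A z) + B z * (starRingEnd ℂ) (B z))⁻¹) := by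
    rw [hwd.fderiv]
    simp only [ContinuousLinearMap.coe_comp', Function.comp_apply, ContinuousLinearMap.add_apply,
    ContinuousLinearMap.coe_smul', Pi.smul_apply, ContinuousLinearMap.coe_restrictScalars',
    ContinuousLinearMap.smulRight_apply, ContinuousLinearMap.one_apply, ContinuousLinearMap.toSpanSingleton_apply,
    ContinuousLinearEquiv.coe_coe, Complex.conjCLE_apply, smul_eq_mul,
    ContinuousLinearMap.neg_apply, ContinuousLinearMap.mulLeftRight_apply,
    Complex.reCLM_apply, map_mul, Complex.conj_I]
    rw [hre]
    simp only [map_add, map_mul, map_neg, map_inv₀, Complex.conj_conj]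
    ring
  have f2 : ((fderiv ℝ w z (Complex.I * z) : ℝ) : ℂ)
      = -(Complex.I * ((A z * (starRingEnd ℂ) (A z) + B z * (starRingEnd ℂ) (B z))⁻¹ * (((starRingEnd ℂ) (A z) * deriv A z + (starRingEnd ℂ) (B z) * deriv B z) * z - (A z * (starRingEnd ℂ) (deriv A z) + B z * (starRingEnd ℂ) (deriv B z)) * (starRingEnd ℂ) z) * (A z * (starRingEnd ℂ) (A z) + B z * (starRingEnd ℂ) (B z))⁻¹)) := by
    rw [hwd.fderiv]
    simp only [ContinuousLinearMap.coe_comp', Function.comp_apply, ContinuousLinearMap.add_apply,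
    ContinuousLinearMap.coe_smul', Pi.smul_apply, ContinuousLinearMap.coe_restrictScalars',
    ContinuousLinearMap.smulRight_apply, ContinuousLinearMap.one_apply, ContinuousLinearMap.toSpanSingleton_apply,
    ContinuousLinearEquiv.coe_coe, Complex.conjCLE_apply, smul_eq_mul,
    ContinuousLinearMap.neg_apply, ContinuousLinearMap.mulLeftRight_apply,
    Complex.reCLM_apply, map_mul, Complex.conj_I]
    rw [hre]
    simp only [map_add, map_mul, map_neg, map_inv₀, Complex.conj_conj, Complex.conj_I]
    ring
  -- values of ζ and w at z
  have hζz : ζ z = ((starRingEnd ℂ) (A z) * C z + (starRingEnd ℂ) (B z) * D z) * (A z * (starRingEnd ℂ) (A z) + B z * (starRingEnd ℂ) (B z))⁻¹ := by rw [hzeq]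
  have hwzC : ((w z : ℝ) : ℂ) = (A z * (starRingEnd ℂ) (A z) + B z * (starRingEnd ℂ) (B z))⁻¹ := congrFun hwCeq z
  -- determinant relations
  have h1 : A z * D z - B z * C z = 1 := hdet z hz
  have h2 : (starRingEnd ℂ) (A z) * (starRingEnd ℂ) (D z)
      - (starRingEnd ℂ) (B z) * (starRingEnd ℂ) (C z) = 1 := by
    have := congrArg (starRingEnd ℂ) h1
    simpa [map_sub, map_mul] using this
  have c1 : ζ z / ((w z : ℝ) : ℂ) ^ 2 = ((starRingEnd ℂ) (A z) * C z + (starRingEnd ℂ) (B z) * D z) * (A z * (starRingEnd ℂ) (A z) + B z * (starRingEnd ℂ) (B z)) := by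
    rw [hζz, hwzC, inv_pow, div_inv_eq_mul]
    field_simp [hNz]
  have c2 : ((1 / w z : ℝ) : ℂ) = (A z * (starRingEnd ℂ) (A z) + B z * (starRingEnd ℂ) (B z)) := by
    rw [Complex.ofReal_div, Complex.ofReal_one, hwzC, one_div, inv_inv]
  have c3 : Complex.I / ((w z : ℝ) : ℂ) = Complex.I * (A z * (starRingEnd ℂ) (A z) + B z * (starRingEnd ℂ) (B z)) := by
    rw [hwzC, div_inv_eq_mul]
  rw [hcombo, c1, c2, c3, f1, f2]
  simp only [map_mul, map_add, map_sub, map_neg, map_inv₀, Complex.conj_conj, map_ofNat]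
  have horient : (starRingEnd ℂ) (A z) * A z + (starRingEnd ℂ) (B z) * B z
      = A z * (starRingEnd ℂ) (A z) + B z * (starRingEnd ℂ) (B z) := by ring
  rw [horient]
  generalize hU : (A z * (starRingEnd ℂ) (A z) + B z * (starRingEnd ℂ) (B z))⁻¹ = u
  have hu : (A z * (starRingEnd ℂ) (A z) + B z * (starRingEnd ℂ) (B z)) * u = 1 := by rw [← hU]; exact mul_inv_cancel₀ hNz
  linear_combination
    (2 * z * ((starRingEnd ℂ) (A z) * deriv A z + (starRingEnd ℂ) (B z) * deriv B z) * u) * h1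
    - (2 * z * ((starRingEnd ℂ) (A z) * C z + (starRingEnd ℂ) (B z) * D z) * (deriv A z * B z - A z * deriv B z) * u) * h2
    + ((((starRingEnd ℂ) (A z) * deriv A z + (starRingEnd ℂ) (B z) * deriv B z) * z - (A z * (starRingEnd ℂ) (deriv A z) + B z * (starRingEnd ℂ) (deriv B z)) * (starRingEnd ℂ) z) * u) * Complex.I_sq
    + ((Complex.I ^ 2 - 1) * z * u * ((starRingEnd ℂ) (A z) * deriv A z + (starRingEnd ℂ) (B z) * deriv B z)
        + 2 * z * (deriv B z * C z - deriv A z * D z)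
        - (Complex.I ^ 2 + 1) * (starRingEnd ℂ) z * u * (A z * (starRingEnd ℂ) (deriv A z) + B z * (starRingEnd ℂ) (deriv B z))
        - 2 * z * u * ((starRingEnd ℂ) (A z) * C z + (starRingEnd ℂ) (B z) * D z) * (A z * (starRingEnd ℂ) (C z) + B z * (starRingEnd ℂ) (D z)) * ((starRingEnd ℂ) (A z) * deriv A z + (starRingEnd ℂ) (B z) * deriv B z)) * hu
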